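/- For any two words u and v, the cyclically reduced product u * v is a cyclic permutation of v * u. -/

import Mathlib

/-- Words over `X ∪ X⁻¹`: elements of the free monoid on `α × Bool`. -/
abbrev Word (α : Type*) := List (α × Bool)

/-- The formal inverse of a word. -/
def wInv {α : Type*} (w : Word α) : Word α := FreeGroup.invRev w

/-- `u` is a cyclic permutation of `v`. -/
def IsCycPerm {α : Type*} (u v : Word α) : Prop :=
  ∃ a b : Word α, v = a ++ b ∧ u = b ++ a

variable {α : Type*} [DecidableEq α]

/-- A word is reduced if it is fixed by free reduction. -/
def Reduced (w : Word α) : Prop := FreeGroup.reduce w = w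

/-- Auxiliary, fuelled computation of the cyclically reduced form of a
reduced word: repeatedly peel off a first letter that is inverse to the
last letter. -/
def cyclicReduceAux : ℕ → Word α → Word α
  | 0, w => w
  | n + 1, [] => []
  | n + 1, x :: xs =>
      if xs.getLast? = some (x.1, !x.2) then cyclicReduceAux n xs.dropLast
      else x :: xs

/-- The cyclically reduced form `ρ̂(w)` of a word `w`. -/
def cyclicReduce (w : Word α) : Word α :=
  cyclicReduceAux w.length (FreeGroup.reduce w)

/-- The cyclically reduced product `u * v := ρ̂(uv)`. -/
def crp (u v : Word α) : Word α := cyclicReduce (u ++ v)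

/-! ### Auxiliary material -/

/-- Adjacent letters that do not cancel. -/
def NoCan (a b : α × Bool) : Prop := ¬(a.1 = b.1 ∧ a.2 = !b.2)

theorem reduce_eq_self_of_chain' {w : Word α} (h : List.Chain' NoCan w) :
    FreeGroup.reduce w = w := by
  induction w with
  | nil => rfl
  | cons x xs ih =>
    have hxs := ih h.tail
    rw [FreeGroup.reduce.cons, hxs]
    cases xs with
    | nil => rfl
    | cons y t =>
      change (if x.1 = y.1 ∧ x.2 = !y.2 then t else x :: y :: t) = x :: y :: t
      rw [if_neg (List.isChain_cons_cons.1 h).1]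

theorem chain'_reduce (w : Word α) : List.Chain' NoCan (FreeGroup.reduce w) := by
  induction w with
  | nil => exact List.isChain_nil
  | cons x xs ih =>
    rw [FreeGroup.reduce.cons]
    cases h : FreeGroup.reduce xs with
    | nil => exact List.isChain_singleton x
    | cons y t =>
      rw [h] at ih
      change List.Chain' NoCan (if x.1 = y.1 ∧ x.2 = !y.2 then t else x :: y :: t)
      split_ifs with hc
      · exact ih.tail
      · exact List.isChain_cons_cons.2 ⟨hc, ih⟩

theorem reduced_iff_chain' {w : Word α} : Reduced w ↔ List.Chain' NoCan w :=
  ⟨fun h => h ▸ chain'_reduce w, reduce_eq_self_of_chain'⟩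

theorem noCan_iff {a b : α × Bool} : NoCan a b ↔ a ≠ (b.1, !b.2) := by
  unfold NoCan
  constructor
  · rintro h rfl
    exact h ⟨rfl, rfl⟩
  · rintro h ⟨h1, h2⟩
    exact h (Prod.ext h1 h2)

theorem inv_letter_ne {x y : α × Bool} (h : y ≠ x) : (x.1, !x.2) ≠ (y.1, !y.2) := by
  intro h'
  obtain ⟨h1, h2⟩ := Prod.mk.injEq _ _ _ _ ▸ h'
  exact h (Prod.ext h1.symm (Bool.not_inj h2).symm)

theorem isCycPerm_refl (w : Word α) : IsCycPerm w w := ⟨w, [], by simp, by simp⟩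

theorem isCycPerm_symm {u v : Word α} : IsCycPerm u v → IsCycPerm v u :=
  fun ⟨a, b, h1, h2⟩ => ⟨b, a, h2, h1⟩

theorem isCycPerm_trans {t u v : Word α} (h1 : IsCycPerm u v) (h2 : IsCycPerm t u) :
    IsCycPerm t v := by
  obtain ⟨a, b, hv, hu⟩ := h1
  obtain ⟨c, d, hu', ht⟩ := h2
  rw [hu] at hu'
  rcases List.append_eq_append_iff.1 hu' with ⟨e, hc, he⟩ | ⟨e, hb, hd⟩
  · exact ⟨e, d ++ b, by simp [hv, he], by simp [ht, hc]⟩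
  · exact ⟨a ++ c, e, by simp [hv, hb], by simp [ht, hd]⟩

/-- The stopping condition for `cyclicReduceAux`. -/
def Stop (w : Word α) : Prop :=
  ∀ x xs, w = x :: xs → xs.getLast? ≠ some (x.1, !x.2)

theorem stop_nil : Stop ([] : Word α) := fun x xs h => by simp at h

theorem aux_fix {w : Word α} (h : Stop w) : ∀ n, cyclicReduceAux n w = w := by
  intro n
  cases n with
  | zero => rfl
  | succ n =>
    cases w with
    | nil => rfl
    | cons x xs =>
      rw [cyclicReduceAux, if_neg (h x xs rfl)]

theorem invRev_cons (x : α × Bool) (l : Word α) :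
    FreeGroup.invRev (x :: l) = FreeGroup.invRev l ++ [(x.1, !x.2)] := by
  simp [FreeGroup.invRev]

theorem invRev_concat (x : α × Bool) (l : Word α) :
    FreeGroup.invRev (l ++ [x]) = (x.1, !x.2) :: FreeGroup.invRev l := by
  simp [FreeGroup.invRev]

theorem chain'_invRev {l : Word α} (h : List.Chain' NoCan l) :
    List.Chain' NoCan (FreeGroup.invRev l) := by
  unfold List.Chain' at h ⊢
  rw [FreeGroup.invRev, List.isChain_reverse, List.isChain_map]
  refine h.imp ?_
  intro a b hab hc
  obtain ⟨h1, h2⟩ := hc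
  rw [Bool.not_not] at h2
  exact hab ⟨h1.symm, h2.symm⟩

theorem aux_peel (n : ℕ) : ∀ g w : Word α, g.length ≤ n → Stop w →
    cyclicReduceAux n (FreeGroup.invRev g ++ w ++ g) = w := by
  induction n with
  | zero =>
    intro g w hg _
    rw [List.length_eq_zero_iff.1 (Nat.le_zero.1 hg)]
    simp [cyclicReduceAux, FreeGroup.invRev]
  | succ n ih =>
    intro g w hg hw
    rcases g.eq_nil_or_concat with rfl | ⟨g', y, rfl⟩
    · simpa [FreeGroup.invRev] using aux_fix hw (n + 1)
    · rw [List.concat_eq_append] at hg ⊢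
      rw [invRev_concat]
      have hform : ((y.1, !y.2) :: FreeGroup.invRev g') ++ w ++ (g' ++ [y]) =
          (y.1, !y.2) :: ((FreeGroup.invRev g' ++ w ++ g') ++ [y]) := by simp
      rw [hform, cyclicReduceAux, if_pos (by simp), List.dropLast_concat]
      apply ih g' w _ hw
      simp only [List.length_append, List.length_cons, List.length_nil] at hg
      omega

theorem aux_decomp : ∀ (n : ℕ) (w : Word α),
    ∃ s : Word α, w = s ++ cyclicReduceAux n w ++ FreeGroup.invRev s := by
  intro n
  induction n with
  | zero => exact fun w => ⟨[], by simp [cyclicReduceAux, FreeGroup.invRev]⟩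
  | succ n ih =>
    intro w
    cases w with
    | nil => exact ⟨[], by simp [cyclicReduceAux, FreeGroup.invRev]⟩
    | cons x xs =>
      rw [cyclicReduceAux]
      by_cases hc : xs.getLast? = some (x.1, !x.2)
      · rw [if_pos hc]
        obtain ⟨s, hs⟩ := ih xs.dropLast
        refine ⟨x :: s, ?_⟩
        have hxs : xs.dropLast ++ [(x.1, !x.2)] = xs :=
          List.dropLast_append_getLast? _ hc
        rw [invRev_cons]
        conv_lhs => rw [← hxs, hs]
        simp
      · rw [if_neg hc]
        exact ⟨[], by simp [FreeGroup.invRev]⟩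

theorem aux_cr (n : ℕ) : ∀ z : Word α, Reduced z → z.length ≤ n →
    Reduced (cyclicReduceAux n z) ∧ Stop (cyclicReduceAux n z) := by
  induction n with
  | zero =>
    intro z hz hlen
    rw [List.length_eq_zero_iff.1 (Nat.le_zero.1 hlen)]
    exact ⟨rfl, stop_nil⟩
  | succ n ih =>
    intro z hz hlen
    cases z with
    | nil => exact ⟨rfl, stop_nil⟩
    | cons x xs =>
      rw [cyclicReduceAux]
      by_cases hc : xs.getLast? = some (x.1, !x.2)
      · rw [if_pos hc]
        apply ih
        · exact reduced_iff_chain'.2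
            (((reduced_iff_chain'.1 hz).tail).prefix xs.dropLast_prefix)
        · simp only [List.length_cons] at hlen
          simp only [List.length_dropLast]
          omega
      · rw [if_neg hc]
        refine ⟨hz, ?_⟩
        intro z' zs h
        injection h with h1 h2
        subst h1; subst h2
        exact hc

/-- Master lemma: reducing a conjugate `g⁻¹ w g` of a cyclically reduced word `w`
gives `t⁻¹ w' t` with `w'` a cyclic permutation of `w`, also cyclically reduced. -/
theorem conj_reduce (N : ℕ) : ∀ g w : Word α, g.length ≤ N → Reduced g → Reduced w → Stop w →
    ∃ t w' : Word α, IsCycPerm w' w ∧ Reduced w' ∧ Stop w' ∧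
      FreeGroup.reduce (FreeGroup.invRev g ++ w ++ g) = FreeGroup.invRev t ++ w' ++ t := by
  induction N with
  | zero =>
    intro g w hg _ hw hsw
    rw [List.length_eq_zero_iff.1 (Nat.le_zero.1 hg)]
    refine ⟨[], w, isCycPerm_refl w, hw, hsw, ?_⟩
    simpa [FreeGroup.invRev, Reduced] using hw
  | succ N ih =>
    intro g w hg hrg hw hsw
    cases g with
    | nil =>
      refine ⟨[], w, isCycPerm_refl w, hw, hsw, ?_⟩
      simpa [FreeGroup.invRev, Reduced] using hw
    | cons x g' =>
      have hg' : g'.length ≤ N := by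
        simp only [List.length_cons] at hg; omega
      have hcg : List.Chain' NoCan (x :: g') := reduced_iff_chain'.1 hrg
      have hrg' : Reduced g' := reduced_iff_chain'.2 hcg.tail
      cases w with
      | nil =>
        have h1 : FreeGroup.mk (FreeGroup.invRev (x :: g') ++ [] ++ (x :: g')) = 1 := by
          rw [List.append_nil, ← FreeGroup.mul_mk, ← FreeGroup.inv_mk]
          exact inv_mul_cancel _
        have h2 : FreeGroup.reduce (FreeGroup.invRev (x :: g') ++ [] ++ (x :: g')) = [] := by
          rw [← FreeGroup.toWord_mk, h1, FreeGroup.toWord_one]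
        exact ⟨[], [], isCycPerm_refl [], rfl, stop_nil, by rw [h2]; simp [FreeGroup.invRev]⟩
      | cons y m =>
        have hcw : List.Chain' NoCan (y :: m) := reduced_iff_chain'.1 hw
        by_cases hxy : y = x
        · -- cancellation at the front: w = x :: m
          subst hxy
          -- the word reduces in one step to invRev g' ++ (m ++ [y]) ++ g'
          have hstep : FreeGroup.Red.Step
              (FreeGroup.invRev g' ++ ((y.1, !y.2) :: (y.1, y.2) :: (m ++ y :: g')))
              (FreeGroup.invRev g' ++ (m ++ y :: g')) :=
            FreeGroup.Red.Step.not_rev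
          have heq : FreeGroup.reduce (FreeGroup.invRev (y :: g') ++ (y :: m) ++ (y :: g'))
              = FreeGroup.reduce (FreeGroup.invRev g' ++ (m ++ [y]) ++ g') := by
            have e1 : FreeGroup.invRev (y :: g') ++ (y :: m) ++ (y :: g')
                = FreeGroup.invRev g' ++ ((y.1, !y.2) :: (y.1, y.2) :: (m ++ y :: g')) := by
              rw [invRev_cons]; simp
            have e2 : FreeGroup.invRev g' ++ (m ++ [y]) ++ g'
                = FreeGroup.invRev g' ++ (m ++ y :: g') := by simp
            rw [e1, e2]
            exact FreeGroup.reduce.Step.eq hstep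
          -- the new core
          have hred1 : List.Chain' NoCan (m ++ [y]) := by
            unfold List.Chain'
            rw [List.isChain_append]
            refine ⟨hcw.tail, List.isChain_singleton y, ?_⟩
            intro a ha b hb
            simp only [List.head?_cons, Option.mem_def, Option.some.injEq] at hb
            subst hb
            rw [noCan_iff]
            intro hax
            exact hsw y m rfl (by rw [Option.mem_def] at ha; rw [ha, hax])
          have hstop1 : Stop (m ++ [y]) := by
            intro z zs hz
            cases m with
            | nil =>
              simp only [List.nil_append, List.cons.injEq] at hz
              obtain ⟨rfl, rfl⟩ := hz
              simp
            | cons y' m' =>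
              rw [List.cons_append] at hz
              injection hz with h1 h2
              subst h1; subst h2
              rw [List.getLast?_concat]
              intro hcontra
              have hx : y = (y'.1, !y'.2) := by
                have := Option.some.inj hcontra
                exact this ▸ rfl
              exact (noCan_iff.1 (List.isChain_cons_cons.1 hcw).1) hx
          have hperm1 : IsCycPerm (m ++ [y]) (y :: m) := ⟨[y], m, rfl, rfl⟩
          obtain ⟨t, w', hp, hr, hs, he⟩ :=
            ih g' (m ++ [y]) hg' hrg' (reduced_iff_chain'.2 hred1) hstop1
          exact ⟨t, w', isCycPerm_trans hperm1 hp, hr, hs, heq.trans he⟩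
        · -- w = y :: m with y ≠ x; look at the last letter of w
          rcases (y :: m).eq_nil_or_concat with habs | ⟨m₂, z, hw2⟩
          · exact absurd habs (by simp)
          · rw [List.concat_eq_append] at hw2
            by_cases hz : z = (x.1, !x.2)
            · -- cancellation at the back: w = m₂ ++ [(x.1, !x.2)]
              subst hz
              have hstep : FreeGroup.Red.Step
                  ((FreeGroup.invRev g' ++ (x.1, !x.2) :: m₂) ++ ((x.1, !x.2) :: (x.1, x.2) :: g'))
                  ((FreeGroup.invRev g' ++ (x.1, !x.2) :: m₂) ++ g') :=
                FreeGroup.Red.Step.not_rev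
              have heq : FreeGroup.reduce (FreeGroup.invRev (x :: g') ++ (y :: m) ++ (x :: g'))
                  = FreeGroup.reduce (FreeGroup.invRev g' ++ ((x.1, !x.2) :: m₂) ++ g') := by
                have e1 : FreeGroup.invRev (x :: g') ++ (y :: m) ++ (x :: g')
                    = (FreeGroup.invRev g' ++ (x.1, !x.2) :: m₂)
                        ++ ((x.1, !x.2) :: (x.1, x.2) :: g') := by
                  rw [invRev_cons, hw2]; simp
                have e2 : FreeGroup.invRev g' ++ ((x.1, !x.2) :: m₂) ++ g'
                    = (FreeGroup.invRev g' ++ (x.1, !x.2) :: m₂) ++ g' := by simp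
                rw [e1, e2]
                exact FreeGroup.reduce.Step.eq hstep
              have hcw2 : List.Chain' NoCan (m₂ ++ [(x.1, !x.2)]) := hw2 ▸ hcw
              obtain ⟨hcm₂, -, hjunc⟩ := List.isChain_append.1 hcw2
              have hred1 : List.Chain' NoCan ((x.1, !x.2) :: m₂) := by
                unfold List.Chain'
                rw [List.isChain_cons]
                refine ⟨?_, hcm₂⟩
                intro b hb
                cases m₂ with
                | nil => simp at hb
                | cons y'' m₂' =>
                  simp only [List.head?_cons, Option.mem_def, Option.some.injEq] at hb
                  subst hb
                  have hy : y'' = y := by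
                    have : (y'' :: m₂') ++ [(x.1, !x.2)] = y :: m := hw2.symm
                    simpa using (List.cons.injEq _ _ _ _ ▸ this).1
                  subst hy
                  rw [noCan_iff]
                  exact inv_letter_ne hxy
              have hstop1 : Stop ((x.1, !x.2) :: m₂) := by
                intro z' zs' h'
                injection h' with h1 h2
                subst h1; subst h2
                intro hcontra
                have ha : (x.1, !(!x.2)) ∈ m₂.getLast? := by
                  rw [Option.mem_def, hcontra]
                have := hjunc _ ha ((x.1, !x.2)) (by simp)
                rw [noCan_iff] at this
                exact this rfl
              have hperm1 : IsCycPerm ((x.1, !x.2) :: m₂) (y :: m) :=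
                ⟨m₂, [(x.1, !x.2)], hw2, rfl⟩
              obtain ⟨t, w', hp, hr, hs, he⟩ :=
                ih g' ((x.1, !x.2) :: m₂) hg' hrg' (reduced_iff_chain'.2 hred1) hstop1
              exact ⟨t, w', isCycPerm_trans hperm1 hp, hr, hs, heq.trans he⟩
            · -- no cancellation at either junction: the whole word is reduced
              refine ⟨x :: g', y :: m, isCycPerm_refl _, hw, hsw, ?_⟩
              apply reduce_eq_self_of_chain'
              unfold List.Chain'
              rw [List.isChain_append]
              refine ⟨?_, reduced_iff_chain'.1 hrg, ?_⟩
              · rw [List.isChain_append]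
                refine ⟨chain'_invRev hcg, hcw, ?_⟩
                intro a ha b hb
                rw [invRev_cons, List.getLast?_concat, Option.mem_def,
                  Option.some.injEq] at ha
                subst ha
                simp only [List.head?_cons, Option.mem_def, Option.some.injEq] at hb
                subst hb
                rw [noCan_iff]
                exact inv_letter_ne hxy
              · intro a ha b hb
                rw [show FreeGroup.invRev (x :: g') ++ (y :: m)
                      = (FreeGroup.invRev (x :: g') ++ m₂) ++ [z] by rw [hw2]; simp,
                  List.getLast?_concat, Option.mem_def, Option.some.injEq] at ha
                subst ha
                simp only [List.head?_cons, Option.mem_def, Option.some.injEq] at hb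
                subst hb
                rw [noCan_iff]
                exact hz

theorem crp_comm_cycPerm (u v : Word α) : IsCycPerm (crp u v) (crp v u) := by
  classical
  -- properties of w := crp u v
  have hlen_uv : (FreeGroup.reduce (u ++ v)).length ≤ (u ++ v).length :=
    FreeGroup.Red.length_le FreeGroup.reduce.red
  obtain ⟨hred_w, hstop_w⟩ :=
    aux_cr (u ++ v).length (FreeGroup.reduce (u ++ v)) FreeGroup.reduce.idem hlen_uv
  obtain ⟨s, hs⟩ := aux_decomp (u ++ v).length (FreeGroup.reduce (u ++ v))
  set w : Word α := cyclicReduceAux (u ++ v).length (FreeGroup.reduce (u ++ v)) with hwdef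
  -- group-theoretic transfer
  set g : Word α := ((FreeGroup.mk s)⁻¹ * FreeGroup.mk u).toWord with hgdef
  have hmkg : FreeGroup.mk g = (FreeGroup.mk s)⁻¹ * FreeGroup.mk u := FreeGroup.mk_toWord
  have hrg : Reduced g := FreeGroup.reduce_toWord _
  have hmk1 : FreeGroup.mk u * FreeGroup.mk v
      = FreeGroup.mk s * FreeGroup.mk w * (FreeGroup.mk s)⁻¹ := by
    rw [FreeGroup.inv_mk, FreeGroup.mul_mk, FreeGroup.mul_mk, FreeGroup.mul_mk, ← hs,
      FreeGroup.reduce.self]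
  have hmk2 : FreeGroup.mk v * FreeGroup.mk u
      = (FreeGroup.mk g)⁻¹ * FreeGroup.mk w * FreeGroup.mk g := by
    have h5 : FreeGroup.mk v
        = (FreeGroup.mk u)⁻¹ * (FreeGroup.mk s * FreeGroup.mk w * (FreeGroup.mk s)⁻¹) := by
      rw [← hmk1]; group
    rw [hmkg, h5]; group
  have hred_vu : FreeGroup.reduce (v ++ u)
      = FreeGroup.reduce (FreeGroup.invRev g ++ w ++ g) := by
    apply FreeGroup.reduce.sound
    rw [← FreeGroup.mul_mk, ← FreeGroup.mul_mk, ← FreeGroup.mul_mk, ← FreeGroup.inv_mk]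
    exact hmk2
  -- apply the master lemma
  obtain ⟨t, w', hperm, hrw', hsw', heq⟩ :=
    conj_reduce g.length g w le_rfl hrg hred_w hstop_w
  have hbound : t.length ≤ (v ++ u).length := by
    have hlen : (FreeGroup.invRev t ++ w' ++ t).length ≤ (v ++ u).length := by
      rw [← heq, ← hred_vu]
      exact FreeGroup.Red.length_le FreeGroup.reduce.red
    simp only [List.length_append, FreeGroup.invRev_length] at hlen ⊢
    omega
  have hcrpvu : crp v u = w' := by
    show cyclicReduceAux (v ++ u).length (FreeGroup.reduce (v ++ u)) = w'
    rw [hred_vu, heq]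
    exact aux_peel _ t w' hbound hsw'
  have hcrpuv : crp u v = w := rfl
  rw [hcrpvu, hcrpuv]
  exact isCycPerm_symm hperm
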